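/- For every c in the open interval (-1/3, 0), the function a ↦ Γ(a, a+c)/Γ(a) is not monotonic on (-c, ∞). -/

import Mathlib

set_option maxHeartbeats 1000000

open Real MeasureTheory Set Filter

noncomputable def uIG (a x : ℝ) : ℝ := ∫ t in Set.Ioi x, t ^ (a - 1) * Real.exp (-t)

-- L1: log bound via integral
lemma log_cubic_bound {v : ℝ} (hv : 0 ≤ v) :
    Real.log (1 + v) ≤ v - v^2/2 + v^3/3 := by
  have hid : IntervalIntegrable (fun t : ℝ => t) volume 0 v :=
    continuous_id.intervalIntegrable _ _
  have hpow : IntervalIntegrable (fun t : ℝ => t^2) volume 0 v :=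
    (continuous_pow 2).intervalIntegrable _ _
  have hc : IntervalIntegrable (fun _ : ℝ => (1:ℝ)) volume 0 v :=
    continuous_const.intervalIntegrable _ _
  have hinv : IntervalIntegrable (fun t : ℝ => 1 / (1 + t)) volume 0 v := by
    apply ContinuousOn.intervalIntegrable
    apply ContinuousOn.div continuousOn_const (by fun_prop)
    intro t ht
    rw [Set.uIcc_of_le hv] at ht
    have := ht.1; positivity
  have h1 : Real.log (1 + v) = ∫ t in (0:ℝ)..v, 1 / (1 + t) := by
    have h := intervalIntegral.integral_comp_add_right (a := (0:ℝ)) (b := v) (fun x => 1 / x) 1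
    simp only [zero_add] at h
    rw [show (fun t : ℝ => 1 / (1 + t)) = (fun t : ℝ => 1 / (t + 1)) from funext fun t => by ring_nf]
    rw [h, integral_one_div]
    · rw [div_one, add_comm]
    · intro h'
      rcases Set.mem_uIcc.mp h' with ⟨h1', _⟩ | ⟨_, h2'⟩ <;> linarith
  have h2 : (∫ t in (0:ℝ)..v, 1 / (1 + t)) ≤ ∫ t in (0:ℝ)..v, (1 - t + t^2) := by
    apply intervalIntegral.integral_mono_on hv hinv ((hc.sub hid).add hpow)
    intro t ht
    have ht0 : 0 ≤ t := ht.1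
    rw [div_le_iff₀ (by linarith)]
    nlinarith
  have h3 : (∫ t in (0:ℝ)..v, (1 - t + t^2)) = v - v^2/2 + v^3/3 := by
    have := intervalIntegral.integral_eq_sub_of_hasDerivAt
      (f := fun t : ℝ => t - t^2/2 + t^3/3) (f' := fun t : ℝ => 1 - t + t^2)
      (a := 0) (b := v) (fun t _ => by
        have : HasDerivAt (fun t : ℝ => t - t^2/2 + t^3/3) (1 - 2*t/2 + 3*t^2/3) t := by
          apply HasDerivAt.add
          apply HasDerivAt.sub (hasDerivAt_id t)
          · exact ((hasDerivAt_pow 2 t).div_const 2).congr_deriv (by ring)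
          · exact ((hasDerivAt_pow 3 t).div_const 3).congr_deriv (by push_cast; ring)
        exact this.congr_deriv (by ring))
      ((hc.sub hid).add hpow)
    rw [this]; ring
  linarith

-- L2
lemma exp_quad_bound {z : ℝ} (hz : |z| ≤ 1) : Real.exp z ≤ 1 + z + (3/4) * z^2 := by
  have h := Real.exp_bound hz (n := 2) (by norm_num)
  have h2 : |Real.exp z - (1 + z)| ≤ |z|^2 * (3/4) := by
    convert h using 2
    · simp [Finset.sum_range_succ]
    · norm_num
  have := abs_le.mp h2
  have h3 : |z|^2 = z^2 := sq_abs z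
  nlinarith [this.2]

-- integrability
lemma uIG_integrable {a x : ℝ} (ha : 0 < a) (hx : 0 ≤ x) :
    IntegrableOn (fun t : ℝ => t ^ (a-1) * Real.exp (-t)) (Set.Ioi x) := by
  have h := Real.GammaIntegral_convergent ha
  have h2 : IntegrableOn (fun t : ℝ => Real.exp (-t) * t ^ (a-1)) (Set.Ioi x) :=
    h.mono_set (Set.Ioi_subset_Ioi hx)
  exact h2.congr_fun (fun t _ => mul_comm _ _) measurableSet_Ioi


-- recurrence
lemma uIG_rec {a x : ℝ} (ha : 0 < a) (hx : 0 < x) :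
    uIG (a+1) x = x ^ a * Real.exp (-x) + a * uIG a x := by
  have key : ∫ t in Set.Ioi x, (t ^ a * Real.exp (-t) - a * (t ^ (a-1) * Real.exp (-t)))
      = (0 : ℝ) - (-(x ^ a * Real.exp (-x))) := by
    apply integral_Ioi_of_hasDerivAt_of_tendsto
      (f := fun t : ℝ => -(t ^ a * Real.exp (-t)))
    · apply ContinuousWithinAt.neg
      apply ContinuousWithinAt.mul
      · exact ((Real.continuousAt_rpow_const x a (Or.inl hx.ne')).continuousWithinAt)
      · exact (Real.continuous_exp.comp continuous_neg).continuousWithinAt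
    · intro t ht
      have ht0 : 0 < t := lt_trans hx ht
      have h1 : HasDerivAt (fun t : ℝ => t ^ a) (a * t ^ (a-1)) t :=
        Real.hasDerivAt_rpow_const (Or.inl ht0.ne')
      have h2 : HasDerivAt (fun t : ℝ => Real.exp (-t)) (-Real.exp (-t)) t := by
        exact ((Real.hasDerivAt_exp (-t)).comp t (hasDerivAt_neg t)).congr_deriv (by ring)
      have := (h1.mul h2).neg
      convert this using 1
      · rfl
      · ring
    · apply Integrable.sub
      · have h := uIG_integrable (a := a + 1) (by linarith) hx.le
        simpa [IntegrableOn] using h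
      · exact (uIG_integrable ha hx.le).const_mul a
    · have h := tendsto_rpow_mul_exp_neg_mul_atTop_nhds_zero a 1 one_pos
      simp only [neg_mul, one_mul] at h
      simpa using h.neg
  have h1 : ∫ t in Set.Ioi x, (t ^ a * Real.exp (-t) - a * (t ^ (a-1) * Real.exp (-t)))
      = (∫ t in Set.Ioi x, t ^ a * Real.exp (-t)) - a * ∫ t in Set.Ioi x, t ^ (a-1) * Real.exp (-t) := by
    rw [integral_sub, MeasureTheory.integral_const_mul]
    · have h := uIG_integrable (a := a + 1) (by linarith) hx.le
      simpa [IntegrableOn] using h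
    · exact (uIG_integrable ha hx.le).const_mul a
  have h2 : uIG (a+1) x = ∫ t in Set.Ioi x, t ^ a * Real.exp (-t) := by
    unfold uIG; norm_num
  rw [h2]
  rw [h1] at key
  unfold uIG
  linarith [key]


lemma uIG_integrable_Ioc {a x y : ℝ} (ha : 0 < a) (hx : 0 ≤ x) :
    IntegrableOn (fun t : ℝ => t ^ (a-1) * Real.exp (-t)) (Set.Ioc x y) := by
  exact (uIG_integrable ha hx).mono_set Set.Ioc_subset_Ioi_self

-- splitting : ∫_{Ioi x} = ∫_{Ioc x y} + ∫_{Ioi y}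
lemma uIG_split {a x y : ℝ} (ha : 0 < a) (hx : 0 ≤ x) (hxy : x ≤ y) :
    (∫ t in Set.Ioi x, t ^ (a-1) * Real.exp (-t))
      = (∫ t in Set.Ioc x y, t ^ (a-1) * Real.exp (-t)) + uIG a y := by
  unfold uIG
  rw [← MeasureTheory.setIntegral_union]
  · rw [Set.Ioc_union_Ioi_eq_Ioi hxy]
  · exact Set.Ioc_disjoint_Ioi le_rfl
  · exact measurableSet_Ioi
  · exact uIG_integrable_Ioc ha hx
  · exact (uIG_integrable ha hx).mono_set (Set.Ioi_subset_Ioi hxy)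

lemma uIG_zero_eq_Gamma {a : ℝ} (ha : 0 < a) : uIG a 0 = Real.Gamma a := by
  rw [Real.Gamma_eq_integral ha]
  unfold uIG
  exact setIntegral_congr_fun measurableSet_Ioi (fun t _ => mul_comm _ _)

lemma uIG_one {x : ℝ} : uIG 1 x = Real.exp (-x) := by
  unfold uIG
  norm_num
  exact integral_exp_Iic (-x)

-- Gamma(a+1) ≥ exp(-1) for a ≥ 0
lemma Gamma_add_one_ge {a : ℝ} (ha : 0 ≤ a) : Real.exp (-1) ≤ Real.Gamma (a+1) := by
  have h0 : (0:ℝ) < a + 1 := by linarith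
  rw [← uIG_zero_eq_Gamma h0]
  have hsplit := uIG_split (x := 0) (y := 1) h0 le_rfl zero_le_one
  have hIoc : 0 ≤ ∫ t in Set.Ioc (0:ℝ) 1, t ^ (a+1-1) * Real.exp (-t) := by
    apply MeasureTheory.setIntegral_nonneg measurableSet_Ioc
    intro t ht
    have := ht.1
    positivity
  have hIoi : Real.exp (-1) ≤ uIG (a+1) 1 := by
    unfold uIG
    rw [← integral_exp_neg_Ioi (1:ℝ)]
    have hie : IntegrableOn (fun x : ℝ => Real.exp (-x)) (Set.Ioi 1) := by
      simpa using exp_neg_integrableOn_Ioi 1 one_pos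
    apply MeasureTheory.setIntegral_mono_on hie
      (uIG_integrable h0 zero_le_one) measurableSet_Ioi
    intro t ht
    have ht1 : (1:ℝ) ≤ t := le_of_lt ht
    nth_rewrite 1 [show Real.exp (-t) = 1 * Real.exp (-t) by ring]
    apply mul_le_mul_of_nonneg_right _ (Real.exp_nonneg _)
    apply Real.one_le_rpow ht1 (by linarith)
  have : uIG (a+1) 0 = (∫ t in Set.Ioc (0:ℝ) 1, t ^ (a+1-1) * Real.exp (-t)) + uIG (a+1) 1 := by
    unfold uIG; exact hsplit
  linarith

-- lower tail bound : ∫_{Ioc 0 y} t^{a-1} e^{-t} ≤ y^a / a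
lemma lower_tail_bound {a y : ℝ} (ha : 0 < a) (hy : 0 < y) :
    (∫ t in Set.Ioc (0:ℝ) y, t ^ (a-1) * Real.exp (-t)) ≤ y ^ a / a := by
  have hr : (-1:ℝ) < a - 1 := by linarith
  have h1 : (∫ t in Set.Ioc (0:ℝ) y, t ^ (a-1) * Real.exp (-t))
      ≤ ∫ t in Set.Ioc (0:ℝ) y, t ^ (a-1) := by
    apply MeasureTheory.setIntegral_mono_on
    · have h := Real.GammaIntegral_convergent ha
      exact ((h.mono_set Set.Ioc_subset_Ioi_self).congr_fun (fun t _ => mul_comm _ _) measurableSet_Ioc)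
    · rw [← intervalIntegrable_iff_integrableOn_Ioc_of_le hy.le]
      exact intervalIntegral.intervalIntegrable_rpow' hr
    · exact measurableSet_Ioc
    · intro t ht
      have ht0 : 0 < t := ht.1
      nth_rewrite 2 [show t ^ (a-1) = t ^ (a-1) * 1 by ring]
      apply mul_le_mul_of_nonneg_left _ (Real.rpow_nonneg ht0.le _)
      exact Real.exp_le_one_iff.mpr (by linarith)
  have h2 : (∫ t in Set.Ioc (0:ℝ) y, t ^ (a-1)) = y ^ a / a := by
    rw [← intervalIntegral.integral_of_le hy.le, integral_rpow (Or.inl hr)]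
    rw [Real.zero_rpow (by linarith : a - 1 + 1 ≠ 0)]
    norm_num
  linarith

lemma exp_one_gt_two : (2:ℝ) < Real.exp 1 := by
  have := Real.add_one_lt_exp (x := 1) one_ne_zero
  linarith

lemma not_mono (c : ℝ) (hc1 : -1/3 < c) (hc2 : c < 0) :
    ¬ MonotoneOn (fun a => uIG a (a + c) / Real.Gamma a) (Set.Ioi (-c)) := by
  intro hM
  set s : ℝ := -c with hs_def
  have hs : 0 < s := by simp [hs_def]; linarith
  have hs3 : s < 1/3 := by simp only [hs_def]; linarith
  set δ : ℝ := Real.exp (-3/s) with hδ_def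
  have hδpos : 0 < δ := Real.exp_pos _
  have hδ1 : δ < 1 := by
    rw [hδ_def, Real.exp_lt_one_iff]
    exact div_neg_of_neg_of_pos (by norm_num) hs
  set a0 : ℝ := s + δ with ha0_def
  have ha0pos : 0 < a0 := by positivity
  have ha0mem : a0 ∈ Set.Ioi (-c) := by
    simp only [Set.mem_Ioi, ← hs_def]; linarith
  have h1mem : (1:ℝ) ∈ Set.Ioi (-c) := by
    simp only [Set.mem_Ioi, ← hs_def]; linarith
  have hδhalf : δ < 1/2 := by
    have h9 : δ ≤ Real.exp (-1) := by
      rw [hδ_def, Real.exp_le_exp, div_le_iff₀ hs, neg_mul]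
      have : 1 * s ≤ 3 := by linarith
      linarith
    have : Real.exp (-1) < 1/2 := by
      rw [Real.exp_neg]
      rw [inv_lt_comm₀ (Real.exp_pos 1) (by norm_num)]
      have := _root_.exp_one_gt_two; linarith
    linarith
  have ha0le1 : a0 ≤ 1 := by rw [ha0_def]; linarith
  have hpow : δ ^ a0 ≤ Real.exp (-3) := by
    have h1 : δ ^ a0 ≤ δ ^ s :=
      Real.rpow_le_rpow_of_exponent_ge hδpos hδ1.le (by rw [ha0_def]; linarith)
    have h2 : δ ^ s = Real.exp (-3) := by
      rw [hδ_def, ← Real.exp_mul]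
      congr 1
      field_simp
    linarith
  have hΓpos : 0 < Real.Gamma a0 := Real.Gamma_pos_of_pos ha0pos
  have key : Real.Gamma a0 - Real.exp (-3) / a0 ≤ uIG a0 (a0 + c) := by
    have hac : a0 + c = δ := by rw [ha0_def, hs_def] at *; ring
    rw [hac]
    have hsplit := uIG_split (a := a0) (x := 0) (y := δ) ha0pos le_rfl hδpos.le
    have h0 : (∫ t in Set.Ioi (0:ℝ), t ^ (a0-1) * Real.exp (-t)) = Real.Gamma a0 :=
      uIG_zero_eq_Gamma ha0pos
    have htail := lower_tail_bound ha0pos hδpos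
    have hδa : δ ^ a0 / a0 ≤ Real.exp (-3) / a0 := by gcongr
    linarith
  -- f a0 ≥ 3/4
  have hΓ1 : Real.exp (-1) ≤ Real.Gamma (a0 + 1) := Gamma_add_one_ge ha0pos.le
  have hΓrec : Real.Gamma (a0 + 1) = a0 * Real.Gamma a0 := Real.Gamma_add_one ha0pos.ne'
  have hq : Real.exp (-3) / a0 / Real.Gamma a0 ≤ 1/4 := by
    rw [div_div, ← hΓrec]
    have h1 : Real.exp (-3) / Real.Gamma (a0+1) ≤ Real.exp (-3) / Real.exp (-1) := by
      gcongr
    have h2 : Real.exp (-3) / Real.exp (-1) = Real.exp (-2) := by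
      rw [← Real.exp_sub]; norm_num
    have h3 : Real.exp (-2) < 1/4 := by
      rw [Real.exp_neg, inv_lt_comm₀ (Real.exp_pos 2) (by norm_num)]
      have h := _root_.exp_one_gt_two
      have : Real.exp 2 = Real.exp 1 * Real.exp 1 := by
        rw [← Real.exp_add]; norm_num
      nlinarith
    linarith
  have hlb : 3/4 ≤ uIG a0 (a0 + c) / Real.Gamma a0 := by
    have h1 : (Real.Gamma a0 - Real.exp (-3) / a0) / Real.Gamma a0
        ≤ uIG a0 (a0 + c) / Real.Gamma a0 := by gcongr
    have h2 : (Real.Gamma a0 - Real.exp (-3) / a0) / Real.Gamma a0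
        = 1 - Real.exp (-3) / a0 / Real.Gamma a0 := by
      field_simp
    linarith
  -- f 1 < 3/5
  have hub : uIG 1 (1 + c) / Real.Gamma 1 < 3/5 := by
    rw [uIG_one, Real.Gamma_one, div_one]
    have h1 : Real.exp (-(1+c)) ≤ Real.exp (-(2/3)) := by
      rw [Real.exp_le_exp]; linarith
    have h2 : Real.exp (-(2/3)) < 3/5 := by
      rw [Real.exp_neg, inv_lt_comm₀ (Real.exp_pos _) (by norm_num)]
      have := Real.add_one_lt_exp (x := 2/3) (by norm_num)
      linarith
    linarith
  have := hM ha0mem h1mem ha0le1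
  simp only at this
  linarith

-- pointwise bound
lemma pointwise_bound {s x a α β K t : ℝ} (hs : 0 < s) (hs3 : s < 1/3) (hx : 6 ≤ x)
    (ha : a = x + s) (hαd : α = s/x) (hβd : β = a/(2*x^2) - a/(3*x^3))
    (hKd : K = 3/4*(α+β)^2) (ht : t ∈ Set.Icc x (x+1)) :
    t ^ a * Real.exp (-t) ≤ x ^ a * Real.exp (-x) *
      (1 + α*(t-x) + (K - β)*(t-x)^2) := by
  obtain ⟨u, hu_def⟩ : ∃ u, u = t - x := ⟨_, rfl⟩
  have hu0 : 0 ≤ u := by rw [hu_def]; linarith [ht.1]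
  have hu1 : u ≤ 1 := by rw [hu_def]; linarith [ht.2]
  have hu2 : u^2 ≤ u := by nlinarith
  have hxpos : (0:ℝ) < x := by linarith
  have htpos : (0:ℝ) < t := by linarith [ht.1]
  have hapos : (0:ℝ) < a := by rw [ha]; linarith
  have hα0 : 0 ≤ α := by rw [hαd]; positivity
  have hαle : α ≤ 1/(3*x) := by
    rw [hαd, div_le_div_iff₀ hxpos (by positivity)]
    nlinarith
  have hβ0 : 0 ≤ β := by
    rw [hβd, sub_nonneg]
    apply div_le_div_of_nonneg_left hapos.le (by positivity)
    nlinarith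
  have hβle : β ≤ 19/(36*x) := by
    rw [hβd]
    have h1 : a/(2*x^2) ≤ 19/(36*x) := by
      rw [div_le_div_iff₀ (by positivity) (by positivity), ha]
      nlinarith
    have h2 : 0 ≤ a/(3*x^3) := by positivity
    linarith
  have hsum : 1/(3*x) + 19/(36*x) = 31/(36*x) := by field_simp; ring
  have hαβ : α + β ≤ 31/(36*x) := by linarith
  have hαβ1 : α + β ≤ 1 := by
    have : 31/(36*x) ≤ 1 := by rw [div_le_one (by positivity)]; linarith
    linarith
  obtain ⟨z, hz_def⟩ : ∃ z, z = α * u - β * u^2 := ⟨_, rfl⟩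
  have hzabs : |z| ≤ (α + β) * u := by
    rw [abs_le]
    constructor
    · rw [hz_def]
      nlinarith [mul_le_mul_of_nonneg_left hu2 hβ0, mul_nonneg hα0 hu0]
    · rw [hz_def]
      nlinarith [mul_nonneg (mul_nonneg hβ0 hu0) hu0, mul_nonneg hβ0 hu0]
  have hzabs1 : |z| ≤ 1 := by
    have h1 : (α + β) * u ≤ 1 * 1 := by
      apply mul_le_mul hαβ1 hu1 hu0 (by linarith)
    linarith
  -- claim 1 : a * log t - t ≤ a * log x - x + z
  have claim1 : a * Real.log t - t ≤ a * Real.log x - x + z := by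
    have hlog : Real.log t = Real.log x + Real.log (1 + u/x) := by
      rw [← Real.log_mul hxpos.ne' (by positivity)]
      congr 1
      field_simp
      rw [hu_def]; ring
    have hv : (0:ℝ) ≤ u/x := by positivity
    have hcb := log_cubic_bound hv
    have e1 : a * (u/x) - u = α * u := by
      rw [ha, hαd]; field_simp; ring
    have e2 : a * ((u/x)^2/2) = (a/(2*x^2)) * u^2 := by
      rw [div_pow]; ring
    have e3 : a * ((u/x)^3/3) = (a/(3*x^3)) * u^3 := by
      rw [div_pow]; ring
    have hu3 : u^3 ≤ u^2 := by nlinarith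
    have e4 : (a/(3*x^3)) * u^3 ≤ (a/(3*x^3)) * u^2 :=
      mul_le_mul_of_nonneg_left hu3 (by positivity)
    have expand : a * (u/x - (u/x)^2/2 + (u/x)^3/3) - u
        = (a*(u/x) - u) - a*((u/x)^2/2) + a*((u/x)^3/3) := by ring
    have key : a * (u/x - (u/x)^2/2 + (u/x)^3/3) - u ≤ z := by
      rw [expand, e1, e2, e3, hz_def, hβd]
      linarith
    have hmul := mul_le_mul_of_nonneg_left hcb hapos.le
    calc a * Real.log t - t = a * Real.log x + a * Real.log (1 + u/x) - t := by
            rw [hlog]; ring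
      _ ≤ a * Real.log x + a * (u/x - (u/x)^2/2 + (u/x)^3/3) - t := by linarith
      _ = a * Real.log x - x + (a * (u/x - (u/x)^2/2 + (u/x)^3/3) - u) := by
            rw [hu_def]; ring
      _ ≤ a * Real.log x - x + z := by linarith
  -- now exponentials
  have hlhs : t ^ a * Real.exp (-t) = Real.exp (a * Real.log t - t) := by
    rw [Real.exp_sub, Real.rpow_def_of_pos htpos, Real.exp_neg, div_eq_mul_inv, mul_comm a _]
  have hrhs : x ^ a * Real.exp (-x) = Real.exp (a * Real.log x - x) := by
    rw [Real.exp_sub, Real.rpow_def_of_pos hxpos, Real.exp_neg, div_eq_mul_inv, mul_comm a _]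
  rw [hlhs, hrhs, ← hu_def]
  have hz2 : z^2 ≤ (α+β)^2 * u^2 := by
    have h1 : |z|^2 ≤ ((α+β)*u)^2 := pow_le_pow_left₀ (abs_nonneg z) hzabs 2
    rw [sq_abs] at h1
    nlinarith
  calc Real.exp (a * Real.log t - t) ≤ Real.exp (a * Real.log x - x + z) :=
        Real.exp_le_exp.mpr claim1
    _ = Real.exp (a * Real.log x - x) * Real.exp z := Real.exp_add _ _
    _ ≤ Real.exp (a * Real.log x - x) * (1 + z + 3/4 * z^2) := by
        exact mul_le_mul_of_nonneg_left (exp_quad_bound hzabs1) (Real.exp_nonneg _)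
    _ ≤ Real.exp (a * Real.log x - x) * (1 + α*u + (K - β)*u^2) := by
        apply mul_le_mul_of_nonneg_left _ (Real.exp_nonneg _)
        rw [hz_def] at hz2
        rw [hz_def, hKd]
        have expand : 1 + α*u + (3/4*(α+β)^2 - β)*u^2
            = 1 + (α*u - β*u^2) + 3/4*((α+β)^2*u^2) := by ring
        rw [expand]
        linarith [hz2]

-- arithmetic lemma
lemma arith_bound {s x a α β K : ℝ} (hs : 0 < s) (hs3 : s < 1/3) (hx : 6 ≤ x)
    (hmx : (1/6 - s/2) * x = 1)
    (ha : a = x + s) (hαd : α = s/x) (hβd : β = a/(2*x^2) - a/(3*x^3))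
    (hKd : K = 3/4*(α+β)^2) :
    α/2 + (K - β)/3 < 0 := by
  have hxpos : (0:ℝ) < x := by linarith
  have hax1 : x ≤ a := by rw [ha]; linarith
  have hax2 : a ≤ 2*x := by rw [ha]; linarith
  have hα0 : 0 ≤ α := by rw [hαd]; positivity
  have hβ0 : 0 ≤ β := by
    rw [hβd, sub_nonneg]
    apply div_le_div_of_nonneg_left (by linarith) (by positivity)
    nlinarith
  have p4 : (0:ℝ) < 1/x^2 := by positivity
  have p1 : α/2 = 1/(6*x) - 1/x^2 := by
    have hsx : s = 1/3 - 2/x := by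
      field_simp at hmx
      field_simp
      linarith
    rw [hαd, hsx]
    field_simp
    ring
  have p2 : 1/(6*x) - (2/9)*(1/x^2) ≤ β/3 := by
    have e : β/3 - (1/(6*x) - (2/9)*(1/x^2)) = (a-x)/(6*x^2) + (2*x-a)/(9*x^3) := by
      rw [hβd]; field_simp; ring
    have t1 : (0:ℝ) ≤ (a-x)/(6*x^2) := by
      apply div_nonneg (by linarith) (by positivity)
    have t2 : (0:ℝ) ≤ (2*x-a)/(9*x^3) := by
      apply div_nonneg (by linarith) (by positivity)
    linarith
  have p3 : K/3 ≤ (1/4)*(1/x^2) := by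
    have hαle : α ≤ 1/(3*x) := by
      rw [hαd, div_le_div_iff₀ hxpos (by positivity)]
      nlinarith
    have hβle : β ≤ 19/(36*x) := by
      rw [hβd]
      have h1 : a/(2*x^2) ≤ 19/(36*x) := by
        rw [div_le_div_iff₀ (by nlinarith : (0:ℝ) < 2*x^2) (by nlinarith : (0:ℝ) < 36*x)]
        nlinarith
      have h2 : 0 ≤ a/(3*x^3) := div_nonneg (by linarith) (by nlinarith)
      linarith
    have hsum : 1/(3*x) + 19/(36*x) ≤ 1/x := by
      rw [div_add_div _ _ (by nlinarith : (3*x:ℝ) ≠ 0) (by nlinarith : (36*x:ℝ) ≠ 0), div_le_div_iff₀ (by nlinarith) hxpos]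
      nlinarith
    have hαβx : α + β ≤ 1/x := by linarith
    have hsq : (α+β)^2 ≤ (1/x)^2 := by
      apply pow_le_pow_left₀ (by linarith) hαβx
    have e2 : (1/x)^2 = 1/x^2 := by rw [div_pow, one_pow]
    rw [hKd]
    rw [e2] at hsq
    linarith
  linarith

-- integral of polynomial over Ioc x (x+1)
lemma poly_integral (x α γ : ℝ) :
    (∫ t in Set.Ioc x (x+1), (1 + α*(t-x) + γ*(t-x)^2)) = 1 + α/2 + γ/3 := by
  rw [← intervalIntegral.integral_of_le (by linarith : x ≤ x+1)]
  have hcomp := intervalIntegral.integral_comp_sub_right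
    (a := x) (b := x+1) (fun u => 1 + α*u + γ*u^2) x
  simp only [sub_self, add_sub_cancel_left] at hcomp
  rw [hcomp]
  have := intervalIntegral.integral_eq_sub_of_hasDerivAt
    (f := fun u : ℝ => u + α*(u^2/2) + γ*(u^3/3)) (f' := fun u : ℝ => 1 + α*u + γ*u^2)
    (a := 0) (b := 1) (fun u _ => by
      have h1 : HasDerivAt (fun u : ℝ => u + α*(u^2/2) + γ*(u^3/3))
          (1 + α*(2*u/2) + γ*(3*u^2/3)) u := by
        apply HasDerivAt.add
        apply HasDerivAt.add (hasDerivAt_id u)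
        · exact (((hasDerivAt_pow 2 u).div_const 2).const_mul α).congr_deriv (by push_cast; ring)
        · exact (((hasDerivAt_pow 3 u).div_const 3).const_mul γ).congr_deriv (by push_cast; ring)
      exact h1.congr_deriv (by ring))
    (by apply Continuous.intervalIntegrable; fun_prop)
  rw [this]
  norm_num
  ring

lemma not_anti (c : ℝ) (hc1 : -1/3 < c) (hc2 : c < 0) :
    ¬ AntitoneOn (fun a => uIG a (a + c) / Real.Gamma a) (Set.Ioi (-c)) := by
  intro hA
  obtain ⟨s, hs_def⟩ : ∃ s, s = -c := ⟨_, rfl⟩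
  have hs : 0 < s := by rw [hs_def]; linarith
  have hs3 : s < 1/3 := by rw [hs_def]; linarith
  obtain ⟨x, hx_def⟩ : ∃ x, x = 1/(1/6 - s/2) := ⟨_, rfl⟩
  have hmpos : (0:ℝ) < 1/6 - s/2 := by linarith
  have hxpos : (0:ℝ) < x := by rw [hx_def]; positivity
  have hmx : (1/6 - s/2) * x = 1 := by
    rw [hx_def]; field_simp
    rw [div_self (by linarith)]
  have hx6 : (6:ℝ) ≤ x := by
    rw [hx_def, le_div_iff₀ hmpos]; linarith
  obtain ⟨a, ha⟩ : ∃ a, a = x + s := ⟨_, rfl⟩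
  have hapos : 0 < a := by rw [ha]; linarith
  have haxc : a + c = x := by rw [ha, hs_def] at *; ring
  have ha1xc : a + 1 + c = x + 1 := by rw [ha, hs_def] at *; ring
  have haMem : a ∈ Set.Ioi (-c) := by
    simp only [Set.mem_Ioi, ← hs_def]; rw [ha]; linarith
  have ha1Mem : a + 1 ∈ Set.Ioi (-c) := by
    simp only [Set.mem_Ioi, ← hs_def]; rw [ha]; linarith
  obtain ⟨α, hαd⟩ : ∃ α, α = s/x := ⟨_, rfl⟩
  obtain ⟨β, hβd⟩ : ∃ β, β = a/(2*x^2) - a/(3*x^3) := ⟨_, rfl⟩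
  obtain ⟨K, hKd⟩ : ∃ K, K = 3/4*(α+β)^2 := ⟨_, rfl⟩
  -- the key integral bound
  have hIineq : (∫ t in Set.Ioc x (x+1), t ^ a * Real.exp (-t)) < x ^ a * Real.exp (-x) := by
    have hpb : ∀ t ∈ Set.Ioc x (x+1), t ^ a * Real.exp (-t)
        ≤ x ^ a * Real.exp (-x) * (1 + α*(t-x) + (K - β)*(t-x)^2) := fun t ht =>
      pointwise_bound hs hs3 hx6 ha hαd hβd hKd ⟨ht.1.le, ht.2⟩
    have hint1 : IntegrableOn (fun t : ℝ => t ^ a * Real.exp (-t)) (Set.Ioc x (x+1)) := by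
      have h : IntegrableOn (fun t : ℝ => t ^ (a+1-1) * Real.exp (-t)) (Set.Ioc x (x+1)) :=
        (uIG_integrable (a := a+1) (by linarith) hxpos.le).mono_set Set.Ioc_subset_Ioi_self
      have e : a + 1 - 1 = a := by ring
      rwa [e] at h
    have hint2 : IntegrableOn
        (fun t : ℝ => x ^ a * Real.exp (-x) * (1 + α*(t-x) + (K - β)*(t-x)^2))
        (Set.Ioc x (x+1)) := by
      apply Continuous.integrableOn_Ioc
      fun_prop
    have hmono := MeasureTheory.setIntegral_mono_on hint1 hint2 measurableSet_Ioc hpb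
    have hre : (∫ t in Set.Ioc x (x+1),
        x ^ a * Real.exp (-x) * (1 + α*(t-x) + (K - β)*(t-x)^2))
        = x ^ a * Real.exp (-x) * (1 + α/2 + (K-β)/3) := by
      rw [MeasureTheory.integral_const_mul, poly_integral]
    have harith := arith_bound hs hs3 hx6 hmx ha hαd hβd hKd
    have hfac : (0:ℝ) < x ^ a * Real.exp (-x) := by positivity
    calc (∫ t in Set.Ioc x (x+1), t ^ a * Real.exp (-t))
        ≤ x ^ a * Real.exp (-x) * (1 + α/2 + (K-β)/3) := by rw [← hre]; exact hmono
      _ < x ^ a * Real.exp (-x) * 1 := by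
          apply mul_lt_mul_of_pos_left _ hfac
          linarith
      _ = x ^ a * Real.exp (-x) := mul_one _
  -- recurrence and splitting
  have hrec := uIG_rec hapos hxpos
  have hsplit := uIG_split (a := a+1) (x := x) (y := x+1) (by linarith) hxpos.le (by linarith)
  have hsplit' : uIG (a+1) x = (∫ t in Set.Ioc x (x+1), t ^ a * Real.exp (-t)) + uIG (a+1) (x+1) := by
    have e : a + 1 - 1 = a := by ring
    rw [show uIG (a+1) x = ∫ t in Set.Ioi x, t ^ (a+1-1) * Real.exp (-t) from rfl, hsplit]
    rw [e]
  have hgt : a * uIG a x < uIG (a+1) (x+1) := by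
    have h := hsplit'
    rw [hrec] at h
    linarith
  -- divide by Gamma
  have hΓpos : 0 < Real.Gamma a := Real.Gamma_pos_of_pos hapos
  have hΓ1pos : 0 < Real.Gamma (a+1) := Real.Gamma_pos_of_pos (by linarith)
  have hΓrec : Real.Gamma (a+1) = a * Real.Gamma a := Real.Gamma_add_one hapos.ne'
  have hflt : uIG a (a + c) / Real.Gamma a < uIG (a+1) (a+1+c) / Real.Gamma (a+1) := by
    rw [haxc, ha1xc]
    calc uIG a x / Real.Gamma a = a * uIG a x / (a * Real.Gamma a) := by
          rw [mul_div_mul_left _ _ hapos.ne']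
      _ = a * uIG a x / Real.Gamma (a+1) := by rw [hΓrec]
      _ < uIG (a+1) (x+1) / Real.Gamma (a+1) := (div_lt_div_iff_of_pos_right hΓ1pos).mpr hgt
  have := hA haMem ha1Mem (by linarith)
  simp only at this
  linarith

theorem stmt2 (c : ℝ) (hc1 : -1/3 < c) (hc2 : c < 0) :
    ¬ MonotoneOn (fun a => uIG a (a + c) / Real.Gamma a) (Set.Ioi (-c)) ∧
    ¬ AntitoneOn (fun a => uIG a (a + c) / Real.Gamma a) (Set.Ioi (-c)) :=
  ⟨not_mono c hc1 hc2, not_anti c hc1 hc2⟩
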